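/- Let G be a connected simple graph, u and v nonadjacent vertices of G, and G' = G + uv. Let w, x, y be vertices with d_G(w,x) < d_G(w,y) and d_{G'}(w,x) = d_{G'}(w,y). Let P be a geodesic from w to x in G and let w' be a vertex of P. If there exists a geodesic from w' to y in G' that does not traverse the edge uv, then w' resolves x and y in G', i.e., d_{G'}(w',x) ≠ d_{G'}(w',y). -/
import Mathlib


/-- Key lemma for edge addition.  Let `G` be connected, `u ≠ v` nonadjacent, and
`G' = G + uv`.  Suppose `d_G(w,x) < d_G(w,y)` while `d_{G'}(w,x) = d_{G'}(w,y)`.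
Let `P` be a geodesic from `w` to `x` in `G` and `w'` a vertex of `P`.  If there is a
geodesic from `w'` to `y` in `G'` not traversing the edge `uv`, then `w'` resolves
`x` and `y` in `G'`. -/
theorem resolves_of_geodesic_avoiding_newEdge {V : Type*} (G : SimpleGraph V)
    (hG : G.Connected) (u v : V) (hne : u ≠ v) (hnadj : ¬ G.Adj u v)
    (w x y w' : V)
    (hlt : G.dist w x < G.dist w y)
    (heq : (G ⊔ SimpleGraph.fromEdgeSet {s(u, v)}).dist w x =
           (G ⊔ SimpleGraph.fromEdgeSet {s(u, v)}).dist w y)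
    (P : G.Walk w x) (hP : P.IsPath) (hPlen : P.length = G.dist w x)
    (hw' : w' ∈ P.support)
    (Q : (G ⊔ SimpleGraph.fromEdgeSet {s(u, v)}).Walk w' y) (hQ : Q.IsPath)
    (hQlen : Q.length = (G ⊔ SimpleGraph.fromEdgeSet {s(u, v)}).dist w' y)
    (hQe : s(u, v) ∉ Q.edges) :
    (G ⊔ SimpleGraph.fromEdgeSet {s(u, v)}).dist w' x ≠
      (G ⊔ SimpleGraph.fromEdgeSet {s(u, v)}).dist w' y := by
  classical
  intro h
  -- split P at w'
  have hsplit : ((P.takeUntil w' hw').append (P.dropUntil w' hw')) = P := P.take_spec hw'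
  have hlensum : (P.takeUntil w' hw').length + (P.dropUntil w' hw').length = P.length := by
    conv_rhs => rw [← hsplit]
    rw [SimpleGraph.Walk.length_append]
  have h1 : G.dist w w' ≤ (P.takeUntil w' hw').length := SimpleGraph.dist_le _
  have h2 : G.dist w' x ≤ (P.dropUntil w' hw').length := SimpleGraph.dist_le _
  -- Q is a walk in G
  have hQG : ∀ e ∈ Q.edges, e ∈ G.edgeSet := by
    intro e he
    have hmem := Q.edges_subset_edgeSet he
    rw [SimpleGraph.edgeSet_sup, SimpleGraph.edgeSet_fromEdgeSet] at hmem
    rcases hmem with h' | h'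
    · exact h'
    · exact absurd (h'.1 ▸ he) hQe
  have hdy : G.dist w' y ≤ Q.length := by
    have := SimpleGraph.dist_le (Q.transfer G hQG)
    rwa [SimpleGraph.Walk.length_transfer] at this
  have hle : (G ⊔ SimpleGraph.fromEdgeSet {s(u, v)}).dist w' x ≤ G.dist w' x := by
    obtain ⟨R, hR⟩ := hG.exists_walk_length_eq_dist w' x
    have := SimpleGraph.dist_le
      (R.mapLe (le_sup_left : G ≤ G ⊔ SimpleGraph.fromEdgeSet {s(u, v)}))
    rwa [SimpleGraph.Walk.length_map, hR] at this
  have htri : G.dist w y ≤ G.dist w w' + G.dist w' y := hG.dist_triangle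
  omega
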